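/- Let F be a finite field, let n be a positive integer, and let P ∈ F[x] be a polynomial of degree n. Then the image P(F) = {P(a) : a ∈ F} is either all of F, or has cardinality at most |F| − (|F| − 1)/n (as an inequality of real numbers). -/

import Mathlib

open Polynomial Finset

theorem wan_esymm_map_hom {R S : Type*} [CommRing R] [CommRing S] (f : R →+* S)
    (s : Multiset R) (k : ℕ) : f (s.esymm k) = (s.map f).esymm k := by
  simp only [Multiset.esymm, map_multiset_sum, Multiset.map_map, Multiset.powersetCard_map,
    Function.comp_def, map_multiset_prod]

theorem wan_esymm_eq_zero (F : Type*) [Field F] [Fintype F]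
    (P : Polynomial F) (hn : 0 < P.natDegree) {k : ℕ} (hk : 0 < k)
    (hkn : k * P.natDegree ≤ Fintype.card F - 2) :
    (Multiset.map (fun x => P.eval x) Finset.univ.val).esymm k = 0 := by
  classical
  set q := Fintype.card F with hq
  set p := ringChar F with hp
  haveI hFact : Fact p.Prime := ⟨CharP.char_is_prime F p⟩
  obtain ⟨e, -, hqe⟩ := FiniteField.card F p
  have hq2 : 2 ≤ q := Fintype.one_lt_card
  have hkq : k ≤ q - 2 := le_trans (Nat.le_mul_of_pos_right k hn) hkn
  let R := WittVector p F
  let τ : F →* R := WittVector.teichmuller p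
  let π : R →+* F := WittVector.constantCoeff
  have hπτ : ∀ x : F, π (τ x) = x := fun x => WittVector.teichmuller_coeff_zero p x
  -- the sums of powers of Teichmuller lifts
  set S : ℕ → R := fun j => ∑ x : F, τ x ^ j with hS
  have hS0 : S 0 = (q : R) := by simp [hS, hq]
  have hSvanish : ∀ j, 1 ≤ j → j ≤ q - 2 → S j = 0 := by
    intro j hj1 hj2
    obtain ⟨g, hg⟩ := IsCyclic.exists_generator (α := Fˣ)
    have horder : orderOf g = q - 1 := by
      rw [orderOf_eq_card_of_forall_mem_zpowers hg, Nat.card_eq_fintype_card,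
        Fintype.card_units]
    have hg0 : (g : F) ≠ 0 := g.ne_zero
    have hne : (τ (g : F)) ^ j ≠ 1 := by
      intro h
      have h2 : ((g : F)) ^ j = 1 := by
        have := congrArg π h
        simpa [map_pow, hπτ] using this
      have h3 : (g : Fˣ) ^ j = 1 := Units.ext (by push_cast; simpa using h2)
      have hdvd := orderOf_dvd_of_pow_eq_one h3
      rw [horder] at hdvd
      have := Nat.le_of_dvd (by omega) hdvd
      omega
    have key : S j * τ (g : F) ^ j = S j := by
      have h1 : S j = ∑ x : F, τ (x * (g : F)) ^ j :=
        (Fintype.sum_equiv (Equiv.mulRight₀ (g : F) hg0)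
          (fun x => τ (x * (g : F)) ^ j) (fun x => τ x ^ j) (fun x => rfl)).symm
      calc S j * τ (g : F) ^ j = ∑ x : F, τ (x * (g : F)) ^ j := by
            rw [hS, Finset.sum_mul]
            exact Finset.sum_congr rfl fun x _ => by rw [map_mul, mul_pow]
        _ = S j := h1.symm
    have : S j * (τ (g : F) ^ j - 1) = 0 := by rw [mul_sub, mul_one, key, sub_self]
    rcases mul_eq_zero.mp this with h | h
    · exact h
    · exact absurd (sub_eq_zero.mp h) hne
  -- the lifted polynomial
  set Q : Polynomial R := P.sum fun i a => C (τ a) * X ^ i with hQ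
  have hQmap : Q.map π = P := by
    rw [hQ, Polynomial.sum_def]
    rw [Polynomial.map_sum]
    simp only [Polynomial.map_mul, Polynomial.map_pow, map_C, map_X, hπτ]
    conv_rhs => rw [← P.sum_C_mul_X_pow_eq]
    rw [Polynomial.sum_def]
  have hQdeg : Q.natDegree ≤ P.natDegree := by
    rw [hQ, Polynomial.sum_def]
    apply Polynomial.natDegree_sum_le_of_forall_le
    intro i hi
    exact le_trans (natDegree_C_mul_X_pow_le _ _) (le_natDegree_of_mem_supp i hi)
  set geval : F → R := fun x => Q.eval (τ x) with hgeval
  have hπg : ∀ x : F, π (geval x) = P.eval x := by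
    intro x
    rw [hgeval]
    have h1 : (Q.map π).eval (π (τ x)) = π (Q.eval (τ x)) := by
      rw [Polynomial.eval_map, Polynomial.eval₂_hom]
    simp only
    rw [← h1, hQmap, hπτ]
  -- power sums divisible by q
  have hPdvd : ∀ i, 1 ≤ i → i ≤ k → (q : R) ∣ ∑ x : F, geval x ^ i := by
    intro i hi1 hik
    have hin : i * P.natDegree ≤ q - 2 :=
      le_trans (Nat.mul_le_mul_right _ hik) hkn
    have h1 : ∑ x : F, geval x ^ i = ∑ x : F, (Q ^ i).eval (τ x) := by
      simp [hgeval, Polynomial.eval_pow]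
    have hdeg : (Q ^ i).natDegree ≤ i * P.natDegree :=
      le_trans Polynomial.natDegree_pow_le (by exact Nat.mul_le_mul_left i hQdeg)
    rw [h1]
    have h2 : ∀ x : F, (Q ^ i).eval (τ x) =
        ∑ j ∈ Finset.range ((Q ^ i).natDegree + 1), (Q ^ i).coeff j * τ x ^ j :=
      fun x => Polynomial.eval_eq_sum_range (τ x)
    rw [Finset.sum_congr rfl fun x _ => h2 x, Finset.sum_comm]
    have h3 : ∀ j ∈ Finset.range ((Q ^ i).natDegree + 1),
        (∑ x : F, (Q ^ i).coeff j * τ x ^ j) = (Q ^ i).coeff j * S j := by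
      intro j _
      rw [hS, Finset.mul_sum]
    rw [Finset.sum_congr rfl h3]
    rw [Finset.sum_eq_single 0]
    · rw [hS0]; exact Dvd.intro_left _ rfl
    · intro j hj hj0
      rw [hSvanish j (Nat.one_le_iff_ne_zero.mpr hj0)
        (le_trans (by exact Nat.lt_succ_iff.mp (Finset.mem_range.mp hj)) hdeg |>.trans hin),
        mul_zero]
    · intro h; exact absurd (Finset.mem_range.mpr (Nat.succ_pos _)) h
  -- Newton's identities give divisibility of k * E_k
  have hdvdkE : (q : R) ∣ (k : R) * (Multiset.map geval Finset.univ.val).esymm k := by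
    have hnewton := congrArg (MvPolynomial.aeval geval) (MvPolynomial.mul_esymm_eq_sum F R k)
    simp only [map_mul, map_natCast, map_pow, map_sum, map_neg, map_one,
      MvPolynomial.aeval_esymm_eq_multiset_esymm, MvPolynomial.psum, MvPolynomial.aeval_X]
      at hnewton
    rw [hnewton]
    apply Dvd.dvd.mul_left
    apply Finset.dvd_sum
    intro a ha
    obtain ⟨ha1, ha2⟩ := Finset.mem_filter.mp ha
    have hsum : a.1 + a.2 = k := Finset.HasAntidiagonal.mem_antidiagonal.mp ha1
    exact Dvd.dvd.mul_left (hPdvd a.2 (by omega) (by omega)) _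
  -- extract: π(E_k) = 0
  set E : R := (Multiset.map geval Finset.univ.val).esymm k with hE
  have hπE : π E = 0 := by
    obtain ⟨s, m, hm, hkfact⟩ := Nat.exists_eq_pow_mul_and_not_dvd (by omega : k ≠ 0)
      p (Fact.out : p.Prime).ne_one
    have hp2 : 2 ≤ p := (Fact.out : p.Prime).two_le
    have hse : s < e := by
      by_contra hse
      push_neg at hse
      have h1 : p ^ (e : ℕ) ≤ p ^ s := Nat.pow_le_pow_right (by omega) hse
      have hm0 : 0 < m := Nat.pos_of_ne_zero (fun h => by simp [h] at hkfact; omega)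
      have h2 : p ^ s ≤ k := by
        calc p ^ s ≤ p ^ s * m := Nat.le_mul_of_pos_right _ hm0
          _ = k := hkfact.symm
      have h3 : k < q := by omega
      rw [hq, hqe] at h3
      omega
    obtain ⟨y, hy⟩ := hdvdkE
    have hps : ((p : R) ^ s) ≠ 0 := pow_ne_zero _ (WittVector.p_nonzero p F)
    have hcancel : (m : R) * E = (p : R) ^ ((e : ℕ) - s) * y := by
      apply mul_left_cancel₀ hps
      have hcast : ((k : ℕ) : R) = (p : R) ^ s * (m : R) := by
        rw [hkfact, Nat.cast_mul, Nat.cast_pow]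
      calc (p : R) ^ s * ((m : R) * E)
          = (k : R) * E := by rw [hcast]; ring
        _ = (q : R) * y := hy
        _ = (p : R) ^ s * ((p : R) ^ ((e : ℕ) - s) * y) := by
            have hqcast : (q : R) = (p : R) ^ (e : ℕ) := by
              rw [hq, hqe, Nat.cast_pow]
            rw [hqcast, ← mul_assoc, ← pow_add]; congr 2; omega
    have hπ2 := congrArg π hcancel
    simp only [map_mul, map_natCast, map_pow] at hπ2
    rw [map_natCast π m, map_natCast π p] at hπ2
    rw [show ((p : ℕ) : F) = 0 from CharP.cast_eq_zero F p,
      zero_pow (by omega : (e : ℕ) - s ≠ 0), zero_mul] at hπ2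
    have hmne : ((m : ℕ) : F) ≠ 0 := fun h => hm ((CharP.cast_eq_zero_iff F p m).mp h)
    exact (mul_eq_zero.mp hπ2).resolve_left hmne
  -- transfer to F
  have hπesymm : π E = (Multiset.map (fun x => P.eval x) Finset.univ.val).esymm k := by
    rw [hE, wan_esymm_map_hom, Multiset.map_map]
    congr 1
    exact Multiset.map_congr rfl (fun x _ => hπg x)
  rw [← hπesymm, hπE]

/-- **Wan's theorem on value sets of polynomials** (Theorem 8.3). -/
theorem wan (F : Type*) [Field F] [Fintype F] (n : ℕ) (hn : 0 < n)
    (P : Polynomial F) (hdeg : P.natDegree = n) :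
    Set.range (fun a : F => P.eval a) = Set.univ ∨
      ((Set.range fun a : F => P.eval a).ncard : ℝ) ≤
        (Fintype.card F : ℝ) - ((Fintype.card F : ℝ) - 1) / (n : ℝ) := by
  classical
  by_cases hsurj : Set.range (fun a : F => P.eval a) = Set.univ
  · exact Or.inl hsurj
  right
  set q := Fintype.card F with hq
  have hq2 : 2 ≤ q := Fintype.one_lt_card
  set K := (q - 2) / n with hK
  have hKq : K ≤ q - 2 := Nat.div_le_self _ _
  set M : Multiset F := Multiset.map (fun x => P.eval x) Finset.univ.val with hM
  have hMcard : Multiset.card M = q := by simp [hM, hq]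
  set u : Polynomial F := (M.map (fun r => Polynomial.X - Polynomial.C r)).prod with hu
  set w : Polynomial F := u - (Polynomial.X ^ q - Polynomial.X) with hw
  have hudeg : u.natDegree = q := by
    rw [hu, Polynomial.natDegree_multiset_prod_of_monic]
    · simp only [Multiset.map_map, Function.comp_def, Polynomial.natDegree_X_sub_C]
      rw [Multiset.map_const', Multiset.sum_replicate, hMcard, smul_eq_mul, mul_one]
    · intro f hf
      obtain ⟨r, _, rfl⟩ := Multiset.mem_map.mp hf
      exact Polynomial.monic_X_sub_C r
  have hesymm0 : ∀ j, 1 ≤ j → j ≤ K → M.esymm j = 0 := by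
    intro j hj1 hj2
    apply wan_esymm_eq_zero F P (hdeg ▸ hn) (by omega)
    rw [hdeg]
    calc j * n ≤ K * n := Nat.mul_le_mul_right n hj2
      _ ≤ q - 2 := by rw [hK]; exact Nat.div_mul_le_self _ _
  -- degree bound on w
  have hwdeg : w.natDegree ≤ q - 1 - K := by
    rw [Polynomial.natDegree_le_iff_coeff_eq_zero]
    intro N hN
    have hNK : q - K ≤ N := by omega
    have hN2 : 2 ≤ N := by omega
    rw [hw]
    simp only [Polynomial.coeff_sub, Polynomial.coeff_X_pow, Polynomial.coeff_X]
    rcases lt_trichotomy N q with h | h | h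
    · -- q - K ≤ N < q
      have hcoeffu : u.coeff N = 0 := by
        rw [hu, Multiset.prod_X_sub_C_coeff M (by omega : N ≤ Multiset.card M), hMcard,
          hesymm0 (q - N) (by omega) (by omega), mul_zero]
      rw [hcoeffu, if_neg (by omega), if_neg (by omega)]
      ring
    · -- N = q
      have hcoeffu : u.coeff N = 1 := by
        rw [hu, Multiset.prod_X_sub_C_coeff M (by omega : N ≤ Multiset.card M), hMcard,
          h, Nat.sub_self]
        simp [Multiset.esymm]
      rw [hcoeffu, if_pos h, if_neg (by omega)]
      ring
    · -- N > q
      have hcoeffu : u.coeff N = 0 :=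
        Polynomial.coeff_eq_zero_of_natDegree_lt (by omega)
      rw [hcoeffu, if_neg (by omega), if_neg (by omega)]
      ring
  -- evaluation of u
  have huev : ∀ a : F, u.eval a = (M.map (fun r => a - r)).prod := by
    intro a
    rw [hu, Polynomial.eval_multiset_prod, Multiset.map_map]
    congr 1
    exact Multiset.map_congr rfl (fun r _ => by simp)
  -- w is nonzero
  obtain ⟨b, hb⟩ := Set.ne_univ_iff_exists_notMem _ |>.mp hsurj
  have hwb : w.eval b ≠ 0 := by
    rw [hw]
    simp only [Polynomial.eval_sub, Polynomial.eval_pow, Polynomial.eval_X]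
    rw [show b ^ q = b from FiniteField.pow_card b, sub_self, sub_zero, huev]
    apply Multiset.prod_ne_zero
    intro h0
    obtain ⟨r, hrM, hr⟩ := Multiset.mem_map.mp h0
    obtain ⟨x, -, rfl⟩ := Multiset.mem_map.mp hrM
    exact hb ⟨x, (sub_eq_zero.mp hr).symm⟩
  have hwne : w ≠ 0 := fun h => hwb (by rw [h]; simp)
  -- all values are roots of w
  set V : Finset F := Finset.univ.image (fun x => P.eval x) with hV
  have hVsub : V ⊆ w.roots.toFinset := by
    intro a ha
    obtain ⟨x, -, rfl⟩ := Finset.mem_image.mp ha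
    rw [Multiset.mem_toFinset, Polynomial.mem_roots hwne]
    rw [Polynomial.IsRoot, hw]
    simp only [Polynomial.eval_sub, Polynomial.eval_pow, Polynomial.eval_X]
    rw [show P.eval x ^ q = P.eval x from FiniteField.pow_card _, sub_self, sub_zero, huev]
    apply Multiset.prod_eq_zero
    rw [Multiset.mem_map]
    exact ⟨P.eval x, Multiset.mem_map.mpr ⟨x, Finset.mem_univ_val _, rfl⟩, sub_self _⟩
  have hVcard : V.card ≤ q - 1 - K := by
    calc V.card ≤ w.roots.toFinset.card := Finset.card_le_card hVsub
      _ ≤ Multiset.card w.roots := Multiset.toFinset_card_le _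
      _ ≤ w.natDegree := Polynomial.card_roots' w
      _ ≤ q - 1 - K := hwdeg
  -- convert set.ncard to finset card
  have hrange : Set.range (fun a : F => P.eval a) = ↑V := by
    rw [hV, Finset.coe_image, Finset.coe_univ, Set.image_univ]
  rw [hrange, Set.ncard_coe_finset]
  -- final arithmetic
  have hmodlt : (q - 2) % n < n := Nat.mod_lt _ hn
  have hKn : q - 1 ≤ n * (K + 1) := by
    have h1 : n * K + (q - 2) % n = q - 2 := by rw [hK]; exact Nat.div_add_mod (q - 2) n
    calc q - 1 ≤ n * K + (q - 2) % n + 1 := by rw [h1]; omega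
      _ = n * K + ((q - 2) % n + 1) := Nat.add_assoc _ _ _
      _ ≤ n * K + n := Nat.add_le_add_left (by omega) _
      _ = n * (K + 1) := by ring
  have hKq1 : K ≤ q - 1 := le_trans hKq (by omega)
  have hcast : ((q - 1 - K : ℕ) : ℝ) = (q : ℝ) - 1 - K := by
    rw [Nat.cast_sub hKq1, Nat.cast_sub (by omega : 1 ≤ q)]
    push_cast
    ring
  have h1 : ((q : ℝ) - 1) / n ≤ (K : ℝ) + 1 := by
    rw [div_le_iff₀ (by positivity : (0:ℝ) < (n:ℝ))]
    have hcast2 : ((q - 1 : ℕ) : ℝ) ≤ ((n * (K + 1) : ℕ) : ℝ) := Nat.cast_le.mpr hKn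
    push_cast [Nat.cast_sub (by omega : 1 ≤ q)] at hcast2
    linarith
  calc (V.card : ℝ) ≤ ((q - 1 - K : ℕ) : ℝ) := Nat.cast_le.mpr hVcard
    _ = (q : ℝ) - 1 - K := hcast
    _ ≤ (q : ℝ) - ((q : ℝ) - 1) / n := by linarith
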